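/- Let κ : ℝ → ℝ be continuous, bounded, and disconjugate (every Jacobi solution for κ that vanishes at two distinct points is identically zero). For each T ≠ 0 let z_T be the unique Jacobi solution for κ with z_T(0) = 1 and z_T(T) = 0. Then the limit of z_T'(0) as T → +∞ exists, and the limit of z_T'(0) as T → −∞ exists. -/

import Mathlib

open Set Filter Topology

/-- A Jacobi solution for `κ` on `ℝ`: a `C²` function with `z'' + κ z = 0`. -/
def IsJacobi (κ z : ℝ → ℝ) : Prop :=
  ContDiff ℝ 2 z ∧ ∀ t, deriv (deriv z) t + κ t * z t = 0

/-- `κ` is disconjugate: every Jacobi solution for `κ` that vanishes at two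
distinct points is identically zero. -/
def Disconjugate (κ : ℝ → ℝ) : Prop :=
  ∀ z : ℝ → ℝ, IsJacobi κ z →
    ∀ a b : ℝ, a ≠ b → z a = 0 → z b = 0 → ∀ t, z t = 0

lemma deriv_contDiff_of_jacobi {z : ℝ → ℝ} (hz : ContDiff ℝ 2 z) :
    ContDiff ℝ 1 (deriv z) := by
  have h : ContDiff ℝ (1 + 1) z := by
    have : ((1 + 1 : ℕ) : WithTop ℕ∞) = (1 + 1 : WithTop ℕ∞) := by norm_num
    exact_mod_cast hz
  exact (contDiff_succ_iff_deriv.mp h).2.2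

lemma IsJacobi.sub' {κ z w : ℝ → ℝ} (hz : IsJacobi κ z) (hw : IsJacobi κ w) :
    IsJacobi κ (fun t => z t - w t) := by
  have hdz : Differentiable ℝ z := hz.1.differentiable (by norm_num)
  have hdw : Differentiable ℝ w := hw.1.differentiable (by norm_num)
  have hdz2 : Differentiable ℝ (deriv z) :=
    (deriv_contDiff_of_jacobi hz.1).differentiable (by norm_num)
  have hdw2 : Differentiable ℝ (deriv w) :=
    (deriv_contDiff_of_jacobi hw.1).differentiable (by norm_num)
  have hd : deriv (fun t => z t - w t) = fun t => deriv z t - deriv w t := by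
    funext t; exact deriv_fun_sub (hdz t) (hdw t)
  refine ⟨hz.1.sub hw.1, fun t => ?_⟩
  rw [hd]
  have : deriv (fun t => deriv z t - deriv w t) t
      = deriv (deriv z) t - deriv (deriv w) t := deriv_fun_sub (hdz2 t) (hdw2 t)
  rw [this]
  have h1 := hz.2 t
  have h2 := hw.2 t
  show deriv (deriv z) t - deriv (deriv w) t + κ t * (z t - w t) = 0
  linear_combination h1 - h2

lemma IsJacobi.const_mul {κ z : ℝ → ℝ} (hz : IsJacobi κ z) (c : ℝ) :
    IsJacobi κ (fun t => c * z t) := by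
  have hdz : Differentiable ℝ z := hz.1.differentiable (by norm_num)
  have hdz2 : Differentiable ℝ (deriv z) :=
    (deriv_contDiff_of_jacobi hz.1).differentiable (by norm_num)
  have hd : deriv (fun t => c * z t) = fun t => c * deriv z t := by
    funext t; exact deriv_const_mul c (hdz t)
  refine ⟨contDiff_const.mul hz.1, fun t => ?_⟩
  rw [hd]
  have : deriv (fun t => c * deriv z t) t = c * deriv (deriv z) t :=
    deriv_const_mul c (hdz2 t)
  rw [this]
  have h1 := hz.2 t
  show c * deriv (deriv z) t + κ t * (c * z t) = 0
  linear_combination c * h1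

/-- Uniqueness for the Jacobi equation: a solution with zero value and zero
derivative at a point vanishes identically. Uses boundedness of `κ`. -/
lemma jacobi_eq_zero {κ z : ℝ → ℝ} {C : ℝ} (hC : ∀ t, |κ t| ≤ C)
    (hz : IsJacobi κ z) (t₀ : ℝ) (h0 : z t₀ = 0) (h1 : deriv z t₀ = 0) :
    ∀ t, z t = 0 := by
  have hCnn : (0 : ℝ) ≤ max C 1 := le_trans zero_le_one (le_max_right _ _)
  set K : NNReal := Real.toNNReal (max C 1) with hK
  have hKcoe : (K : ℝ) = max C 1 := Real.coe_toNNReal _ hCnn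
  set v : ℝ → ℝ × ℝ → ℝ × ℝ := fun t p => (p.2, -(κ t * p.1)) with hv
  have hlip : ∀ t, LipschitzOnWith K (v t) (univ : Set (ℝ × ℝ)) := by
    intro t
    apply LipschitzOnWith.of_dist_le_mul
    intro p _ q _
    show dist ((p.2, -(κ t * p.1)) : ℝ × ℝ) ((q.2, -(κ t * q.1)) : ℝ × ℝ) ≤ K * dist p q
    simp only [Prod.dist_eq, Real.dist_eq]
    rw [hKcoe]
    have habs : |-(κ t * p.1) - -(κ t * q.1)| = |κ t| * |p.1 - q.1| := by
      have h' : -(κ t * p.1) - -(κ t * q.1) = κ t * (q.1 - p.1) := by ring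
      rw [h', abs_mul, abs_sub_comm q.1 p.1]
    have h1' : |p.2 - q.2| ≤ max |p.1 - q.1| |p.2 - q.2| := le_max_right _ _
    have h2' : |p.1 - q.1| ≤ max |p.1 - q.1| |p.2 - q.2| := le_max_left _ _
    have hmnn : (0:ℝ) ≤ max |p.1 - q.1| |p.2 - q.2| :=
      le_trans (abs_nonneg _) (le_max_left _ _)
    apply max_le
    · nlinarith [le_max_right C 1]
    · rw [habs]
      have hk := hC t
      have hknn := abs_nonneg (κ t)
      nlinarith [le_max_left C 1, abs_nonneg (p.1 - q.1)]
  have hdz : Differentiable ℝ z := hz.1.differentiable (by norm_num)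
  have hdz2 : Differentiable ℝ (deriv z) :=
    (deriv_contDiff_of_jacobi hz.1).differentiable (by norm_num)
  set f : ℝ → ℝ × ℝ := fun t => (z t, deriv z t) with hf
  set g : ℝ → ℝ × ℝ := fun _ => ((0 : ℝ), (0 : ℝ)) with hg
  have hf' : ∀ t, HasDerivAt f (v t (f t)) t := by
    intro t
    have h1' : HasDerivAt z (deriv z t) t := (hdz t).hasDerivAt
    have h2' : HasDerivAt (deriv z) (deriv (deriv z) t) t := (hdz2 t).hasDerivAt
    have heq : deriv (deriv z) t = -(κ t * z t) := by have := hz.2 t; linarith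
    rw [heq] at h2'
    exact h1'.prodMk h2'
  have hg' : ∀ t, HasDerivAt g (v t (g t)) t := by
    intro t
    have : v t (g t) = (0, 0) := by simp [hv, hg]
    rw [this]
    exact hasDerivAt_const t _
  intro t
  set a : ℝ := min t₀ t - 1 with hA
  set b : ℝ := max t₀ t + 1 with hB
  have ht₀ : t₀ ∈ Ioo a b := by
    constructor
    · have := min_le_left t₀ t; simp [hA]; linarith
    · have := le_max_left t₀ t; simp [hB]; linarith
  have ht : t ∈ Ioo a b := by
    constructor
    · have := min_le_right t₀ t; simp [hA]; linarith
    · have := le_max_right t₀ t; simp [hB]; linarith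
  have heq0 : f t₀ = g t₀ := by simp [hf, hg, h0, h1]
  have := ODE_solution_unique_of_mem_Ioo (fun s _ => hlip s) ht₀
    (fun s _ => ⟨hf' s, mem_univ _⟩) (fun s _ => ⟨hg' s, mem_univ _⟩) heq0 ht
  have := congrArg Prod.fst this
  simpa [hf, hg] using this

/-- Any Jacobi solution vanishing at `0` is a multiple of a fixed one with
nonzero derivative at `0`. -/
lemma jacobi_span {κ u w : ℝ → ℝ} {C : ℝ} (hC : ∀ t, |κ t| ≤ C)
    (hu : IsJacobi κ u) (hw : IsJacobi κ w) (hu0 : u 0 = 0) (hw0 : w 0 = 0)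
    (hd : deriv u 0 ≠ 0) :
    ∀ t, w t = (deriv w 0 / deriv u 0) * u t := by
  set c : ℝ := deriv w 0 / deriv u 0 with hc
  have hcu : IsJacobi κ (fun t => c * u t) := hu.const_mul c
  have hφ : IsJacobi κ (fun t => w t - c * u t) := hw.sub' hcu
  have hdu : Differentiable ℝ u := hu.1.differentiable (by norm_num)
  have hdw : Differentiable ℝ w := hw.1.differentiable (by norm_num)
  have hφ0 : (fun t => w t - c * u t) 0 = 0 := by simp [hw0, hu0]
  have hφ1 : deriv (fun t => w t - c * u t) 0 = 0 := by
    rw [deriv_fun_sub (hdw 0) ((hdu 0).const_mul c), deriv_const_mul c (hdu 0)]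
    rw [hc, div_mul_cancel₀ _ hd, sub_self]
  have := jacobi_eq_zero hC hφ 0 hφ0 hφ1
  intro t
  have ht := this t
  change w t - c * u t = 0 at ht
  linarith

/-- Green's lemma: if `κ` is continuous, bounded and disconjugate, and for each
`T ≠ 0` the function `Z T` is the Jacobi solution with `Z T 0 = 1` and
`Z T T = 0`, then `(Z T)'(0)` converges as `T → +∞` and as `T → -∞`. -/
theorem green_limits (κ : ℝ → ℝ) (hκ : Continuous κ)
    (hbd : ∃ C : ℝ, ∀ t, |κ t| ≤ C) (hdis : Disconjugate κ)
    (Z : ℝ → ℝ → ℝ)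
    (hZ : ∀ T : ℝ, T ≠ 0 → IsJacobi κ (Z T) ∧ Z T 0 = 1 ∧ Z T T = 0) :
    (∃ L : ℝ, Tendsto (fun T => deriv (Z T) 0) atTop (nhds L)) ∧
      (∃ L : ℝ, Tendsto (fun T => deriv (Z T) 0) atBot (nhds L)) := by
  classical
  obtain ⟨C, hC⟩ := hbd
  obtain ⟨hJ1, h10, h11⟩ := hZ 1 one_ne_zero
  obtain ⟨hJm, hm0, hmm⟩ := hZ (-1) (by norm_num)
  -- Z T vanishes only at T
  have honly : ∀ T : ℝ, T ≠ 0 → ∀ s, Z T s = 0 → s = T := by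
    intro T hT s hs
    by_contra hsT
    have := hdis (Z T) (hZ T hT).1 s T hsT hs (hZ T hT).2.2 0
    rw [(hZ T hT).2.1] at this
    norm_num at this
  -- sign of Z T
  have hsign : ∀ T : ℝ, T ≠ 0 → ∀ s, T ∉ uIcc 0 s → 0 < Z T s := by
    intro T hT s hTs
    by_contra hle
    push_neg at hle
    have hcont : ContinuousOn (Z T) (uIcc s 0) :=
      (hZ T hT).1.1.continuous.continuousOn
    have hmem : (0 : ℝ) ∈ uIcc (Z T s) (Z T 0) := by
      rw [(hZ T hT).2.1, Set.mem_uIcc]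
      left; exact ⟨hle, zero_le_one⟩
    obtain ⟨t, htmem, htval⟩ := intermediate_value_uIcc hcont hmem
    have := honly T hT t htval
    rw [this] at htmem
    rw [uIcc_comm] at htmem
    exact hTs htmem
  -- the solution u vanishing at 0
  set u : ℝ → ℝ := fun t => Z (-1) t - Z 1 t with hudef
  have hu : IsJacobi κ u := hJm.sub' hJ1
  have hu0 : u 0 = 0 := by simp [hudef, h10, hm0]
  have hu1 : 0 < u 1 := by
    have : 0 < Z (-1) 1 := by
      apply hsign (-1) (by norm_num) 1
      rw [uIcc_of_le (by norm_num : (0:ℝ) ≤ 1)]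
      intro h; exact absurd h.1 (by norm_num)
    simpa [hudef, h11] using this
  have hum1 : u (-1) < 0 := by
    have : 0 < Z 1 (-1) := by
      apply hsign 1 one_ne_zero (-1)
      rw [uIcc_of_ge (by norm_num : (-1:ℝ) ≤ 0)]
      intro h; exact absurd h.2 (by norm_num)
    simpa [hudef, hmm] using this
  have huonly : ∀ s, u s = 0 → s = 0 := by
    intro s hs
    by_contra hs0
    have := hdis u hu 0 s (Ne.symm hs0) hu0 hs 1
    linarith
  have hucont : Continuous u := hu.1.continuous
  have hupos : ∀ s, 0 < s → 0 < u s := by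
    intro s hspos
    by_contra hle
    push_neg at hle
    have hmem : (0 : ℝ) ∈ uIcc (u s) (u 1) := by
      rw [Set.mem_uIcc]; left; exact ⟨hle, le_of_lt hu1⟩
    obtain ⟨t, htmem, htval⟩ := intermediate_value_uIcc hucont.continuousOn hmem
    have ht0 := huonly t htval
    rw [ht0] at htmem
    rcases Set.mem_uIcc.mp htmem with ⟨h', _⟩ | ⟨_, h'⟩
    · linarith
    · linarith
  have huneg : ∀ s, s < 0 → u s < 0 := by
    intro s hsneg
    by_contra hle
    push_neg at hle
    have hmem : (0 : ℝ) ∈ uIcc (u s) (u (-1)) := by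
      rw [Set.mem_uIcc]; right; exact ⟨le_of_lt hum1, hle⟩
    obtain ⟨t, htmem, htval⟩ := intermediate_value_uIcc hucont.continuousOn hmem
    have ht0 := huonly t htval
    rw [ht0] at htmem
    rcases Set.mem_uIcc.mp htmem with ⟨h', _⟩ | ⟨_, h'⟩
    · linarith
    · linarith
  -- derivative of u at 0 is positive
  set d : ℝ := deriv u 0 with hd
  have hd0 : d ≠ 0 := by
    intro h
    have := jacobi_eq_zero hC hu 0 hu0 h 1
    linarith
  have hder : HasDerivAt u d 0 := ((hu.1.differentiable (by norm_num)) 0).hasDerivAt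
  have hdpos : 0 < d := by
    rcases lt_or_gt_of_ne hd0 with hneg | hpos
    · exfalso
      have hslope : Tendsto (slope u 0) (𝓝[>] 0) (𝓝 d) :=
        (hasDerivAt_iff_tendsto_slope.mp hder).mono_left
          (nhdsWithin_mono _ (fun x hx => ne_of_gt hx))
      have hnn : 0 ≤ d := by
        apply ge_of_tendsto hslope
        filter_upwards [self_mem_nhdsWithin] with x hx
        have hxpos : (0:ℝ) < x := hx
        rw [slope_def_field]
        rw [hu0]
        apply div_nonneg (by simpa using le_of_lt (hupos x hxpos)) (by linarith)
      linarith
    · exact hpos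
  -- decomposition of solutions
  set a : ℝ → ℝ := fun T => deriv (Z T) 0 with ha
  have hspan : ∀ T : ℝ, T ≠ 0 → ∀ t, Z T t - Z 1 t = ((a T - a 1) / d) * u t := by
    intro T hT t
    have hw : IsJacobi κ (fun t => Z T t - Z 1 t) := (hZ T hT).1.sub' hJ1
    have hw0 : (fun t => Z T t - Z 1 t) 0 = 0 := by
      simp [(hZ T hT).2.1, h10]
    have hdT : Differentiable ℝ (Z T) := (hZ T hT).1.1.differentiable (by norm_num)
    have hd1 : Differentiable ℝ (Z 1) := hJ1.1.differentiable (by norm_num)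
    have key := jacobi_span hC hu hw hu0 hw0 hd0 t
    have hder0 : deriv (fun t => Z T t - Z 1 t) 0 = a T - a 1 := by
      rw [deriv_fun_sub (hdT 0) (hd1 0)]
    rw [hder0] at key
    exact key
  have hkey : ∀ S : ℝ, S ≠ 0 → ∀ T : ℝ, T ≠ 0 → Z S T = ((a S - a T) / d) * u T := by
    intro S hS T hT
    have h1' := hspan S hS T
    have h2' := hspan T hT T
    rw [(hZ T hT).2.2] at h2'
    have hexp : ((a S - a T) / d) * u T
        = ((a S - a 1) / d) * u T - ((a T - a 1) / d) * u T := by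
      field_simp
      ring
    rw [hexp]
    linarith
  -- monotonicity and bounds
  have hmono_pos : ∀ T T' : ℝ, 0 < T → T < T' → a T < a T' := by
    intro T T' hTpos hTT'
    have hT'pos : 0 < T' := lt_trans hTpos hTT'
    have hk := hkey T' (ne_of_gt hT'pos) T (ne_of_gt hTpos)
    have hZpos : 0 < Z T' T := by
      apply hsign T' (ne_of_gt hT'pos) T
      rw [uIcc_of_le (le_of_lt hTpos)]
      intro h; exact absurd h.2 (not_le.mpr hTT')
    have huT : 0 < u T := hupos T hTpos
    have hr : 0 < (a T' - a T) / d := by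
      by_contra h; push_neg at h
      nlinarith [mul_nonneg (neg_nonneg.mpr h) huT.le]
    have h2 : (a T' - a T) / d * d = a T' - a T := div_mul_cancel₀ _ hd0
    nlinarith [mul_pos hr hdpos]
  have hmono_neg : ∀ S' S : ℝ, S' < S → S < 0 → a S' < a S := by
    intro S' S hSS' hSneg
    have hS'neg : S' < 0 := lt_trans hSS' hSneg
    have hk := hkey S' (ne_of_lt hS'neg) S (ne_of_lt hSneg)
    have hZpos : 0 < Z S' S := by
      apply hsign S' (ne_of_lt hS'neg) S
      rw [uIcc_of_ge (le_of_lt hSneg)]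
      intro h; exact absurd h.1 (not_le.mpr hSS')
    have huS : u S < 0 := huneg S hSneg
    have hr : (a S' - a S) / d < 0 := by
      by_contra h; push_neg at h
      nlinarith [mul_nonneg h (neg_nonneg.mpr huS.le)]
    have h2 : (a S' - a S) / d * d = a S' - a S := div_mul_cancel₀ _ hd0
    nlinarith [mul_neg_of_neg_of_pos hr hdpos]
  have hcross : ∀ S T : ℝ, S < 0 → 0 < T → a T < a S := by
    intro S T hSneg hTpos
    have hk := hkey S (ne_of_lt hSneg) T (ne_of_gt hTpos)
    have hZpos : 0 < Z S T := by
      apply hsign S (ne_of_lt hSneg) T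
      rw [uIcc_of_le (le_of_lt hTpos)]
      intro h; exact absurd h.1 (not_le.mpr hSneg)
    have huT : 0 < u T := hupos T hTpos
    have hr : 0 < (a S - a T) / d := by
      by_contra h; push_neg at h
      nlinarith [mul_nonneg (neg_nonneg.mpr h) huT.le]
    have h2 : (a S - a T) / d * d = a S - a T := div_mul_cancel₀ _ hd0
    nlinarith [mul_pos hr hdpos]
  constructor
  · -- limit at +∞
    set g : ℝ → ℝ := fun T => a (max T 1) with hgdef
    have hgmono : Monotone g := by
      intro x y hxy
      have h1' : max x 1 ≤ max y 1 := max_le_max hxy le_rfl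
      rcases h1'.lt_or_eq with h | h
      · exact le_of_lt (hmono_pos _ _ (lt_of_lt_of_le one_pos (le_max_right x 1)) h)
      · simp only [hgdef, h]; exact le_rfl
    have hgbdd : BddAbove (range g) := by
      refine ⟨a (-1), ?_⟩
      rintro _ ⟨x, rfl⟩
      exact le_of_lt (hcross (-1) (max x 1) (by norm_num)
        (lt_of_lt_of_le one_pos (le_max_right x 1)))
    refine ⟨⨆ i, g i, Tendsto.congr' ?_ (tendsto_atTop_ciSup hgmono hgbdd)⟩
    filter_upwards [eventually_ge_atTop (1 : ℝ)] with T hT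
    simp [hgdef, max_eq_left hT, ha]
  · -- limit at -∞
    set g : ℝ → ℝ := fun T => a (min T (-1)) with hgdef
    have hgmono : Monotone g := by
      intro x y hxy
      have h1' : min x (-1) ≤ min y (-1) := min_le_min hxy le_rfl
      rcases h1'.lt_or_eq with h | h
      · refine le_of_lt (hmono_neg _ _ h ?_)
        exact lt_of_le_of_lt (min_le_right y (-1)) (by norm_num)
      · simp only [hgdef, h]; exact le_rfl
    have hgbdd : BddBelow (range g) := by
      refine ⟨a 1, ?_⟩
      rintro _ ⟨x, rfl⟩
      refine le_of_lt (hcross (min x (-1)) 1 ?_ one_pos)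
      exact lt_of_le_of_lt (min_le_right x (-1)) (by norm_num)
    refine ⟨⨅ i, g i, Tendsto.congr' ?_ (tendsto_atBot_ciInf hgmono hgbdd)⟩
    filter_upwards [eventually_le_atBot (-1 : ℝ)] with T hT
    simp [hgdef, min_eq_left hT, ha]
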